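/- With the Tarama energy E_tar(t) = |u'(t)|²/c(t) + λ²c(t)|u(t)|² + c'(t)²|u(t)|²/(4c(t)³) + c'(t)u(t)u'(t)/c(t)² associated to a C² propagation speed c and a solution u of u'' + λ²c(t)²u = 0, one has the identity E_tar'(t) = ( (|u(t)|²/2)·c'(t)/c(t)³ + u(t)u'(t)/c(t)² )·( c''(t) − (3/2)c'(t)²/c(t) ) for all t in the interval of definition. -/

import Mathlib

open Set

theorem stmt5 (T₀ lam : ℝ) (hT : 0 < T₀) (hlam : 0 < lam) (c u : ℝ → ℝ)
    (hcpos : ∀ t ∈ Set.Ioc 0 T₀, 0 < c t)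
    (hc : ∀ t ∈ Set.Ioc 0 T₀, DifferentiableAt ℝ c t)
    (hc' : ∀ t ∈ Set.Ioc 0 T₀, DifferentiableAt ℝ (deriv c) t)
    (hu : ∀ t ∈ Set.Ioc 0 T₀, DifferentiableAt ℝ u t)
    (hu' : ∀ t ∈ Set.Ioc 0 T₀, DifferentiableAt ℝ (deriv u) t)
    (hode : ∀ t ∈ Set.Ioc 0 T₀, deriv (deriv u) t + lam ^ 2 * (c t) ^ 2 * u t = 0) :
    ∀ t ∈ Set.Ioo 0 T₀,
      deriv (fun s =>
          (deriv u s) ^ 2 / c s + lam ^ 2 * c s * (u s) ^ 2 +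
            (deriv c s) ^ 2 * (u s) ^ 2 / (4 * (c s) ^ 3) +
            deriv c s * u s * deriv u s / (c s) ^ 2) t =
        ((u t) ^ 2 / 2 * (deriv c t / (c t) ^ 3) + u t * deriv u t / (c t) ^ 2) *
          (deriv (deriv c) t - 3 / 2 * (deriv c t) ^ 2 / c t) := by
  intro t ht
  have ht' : t ∈ Set.Ioc 0 T₀ := ⟨ht.1, ht.2.le⟩
  have hct : 0 < c t := hcpos t ht'
  have hc0 : c t ≠ 0 := hct.ne'
  have HC := (hc t ht').hasDerivAt
  have HC' := (hc' t ht').hasDerivAt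
  have HU := (hu t ht').hasDerivAt
  have HU' := (hu' t ht').hasDerivAt
  have h1 := (HU'.pow 2).div HC hc0
  have h2 := (HC.const_mul (lam ^ 2)).mul (HU.pow 2)
  have h3d := (HC.pow 3).const_mul (4 : ℝ)
  have h3 := ((HC'.pow 2).mul (HU.pow 2)).div h3d
      (by positivity : (0:ℝ) < 4 * c t ^ 3).ne'
  have h4 := ((HC'.mul HU).mul HU').div (HC.pow 2) (pow_ne_zero 2 hc0)
  have H := ((h1.add h2).add h3).add h4
  rw [HasDerivAt.deriv (f := fun s =>
          (deriv u s) ^ 2 / c s + lam ^ 2 * c s * (u s) ^ 2 +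
            (deriv c s) ^ 2 * (u s) ^ 2 / (4 * (c s) ^ 3) +
            deriv c s * u s * deriv u s / (c s) ^ 2) H]
  simp only [Pi.pow_apply, Pi.mul_apply]
  have ho := hode t ht'
  have hupp : deriv (deriv u) t = -(lam ^ 2 * c t ^ 2 * u t) := by linarith
  rw [hupp]
  field_simp
  ring
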